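/- For every k ∈ ℕ and every x ∈ ℝⁿ, the probability under the trajectory measure of the reach-avoid event equals the value function: Pr^{x}(RA_k) = V_k(x), where V is defined by the dynamic-programming recursion. -/
import Mathlib


open MeasureTheory ProbabilityTheory Finset

attribute [local instance] Classical.propDecidable

/-- The reach-avoid value function `V_k` defined by the dynamic-programming recursion:
`V_k(x) = 1` on `X_r`, `V_k(x) = 0` on `X_u = (X_s)ᶜ`, `V_0(x) = 0` on `X_s \\ X_r`, and
`V_k(x) = E[V_{k-1}(x') | x]` on `X_s \\ X_r` for `k ≥ 1` (assuming `X_r ⊆ X_s`). -/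
noncomputable def reachAvoidValue {n : ℕ}
    (κ : Kernel (Fin n → ℝ) (Fin n → ℝ)) (Xs Xr : Set (Fin n → ℝ)) :
    ℕ → (Fin n → ℝ) → ℝ
  | 0, x => if x ∈ Xr then 1 else 0
  | k + 1, x =>
      if x ∈ Xr then 1
      else if x ∈ Xs then ∫ y, reachAvoidValue κ Xs Xr k y ∂(κ x)
      else 0

/-- Prepend a state at time `0` to a trajectory. -/
def prependState {n : ℕ} (x : Fin n → ℝ) (ω : ℕ → (Fin n → ℝ)) : ℕ → (Fin n → ℝ)
  | 0 => x
  | k + 1 => ω k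

/-- The reach-avoid event with horizon `H`: there is `k ≤ H` with `x_k ∈ X_r` and
`x_{k'} ∉ X_u = (X_s)ᶜ` for all `k' < k`. -/
def reachAvoidEvent {n : ℕ} (Xs Xr : Set (Fin n → ℝ)) (H : ℕ) :
    Set (ℕ → (Fin n → ℝ)) :=
  {ω | ∃ k ≤ H, ω k ∈ Xr ∧ ∀ k' < k, ω k' ∉ Xsᶜ}


section AuxRA
variable {n : ℕ}

lemma measurable_prependState (x : Fin n → ℝ) : Measurable (prependState x) := by
  apply measurable_pi_lambda
  intro k
  cases k with
  | zero => exact measurable_const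
  | succ k => exact measurable_pi_apply k

lemma measurableSet_reachAvoidEvent {Xs Xr : Set (Fin n → ℝ)}
    (hXs : MeasurableSet Xs) (hXr : MeasurableSet Xr) (H : ℕ) :
    MeasurableSet (reachAvoidEvent Xs Xr H) := by
  have : reachAvoidEvent Xs Xr H =
      ⋃ k ∈ Set.Iic H, ((fun ω : ℕ → (Fin n → ℝ) => ω k) ⁻¹' Xr) ∩
        ⋂ k' ∈ Set.Iio k, ((fun ω : ℕ → (Fin n → ℝ) => ω k') ⁻¹' Xsᶜ)ᶜ := by
    ext ω
    simp only [reachAvoidEvent, Set.mem_setOf_eq, Set.mem_iUnion, Set.mem_inter_iff,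
      Set.mem_preimage, Set.mem_iInter, Set.mem_compl_iff, Set.mem_Iic, Set.mem_Iio,
      Set.not_notMem]
    tauto
  rw [this]
  refine MeasurableSet.biUnion (Set.to_countable _) fun k _ => ?_
  refine ((measurable_pi_apply k) hXr).inter ?_
  exact MeasurableSet.biInter (Set.to_countable _) fun k' _ =>
    ((measurable_pi_apply k') hXs.compl).compl

lemma prepend_mem_RA_zero {Xs Xr : Set (Fin n → ℝ)} (x : Fin n → ℝ)
    (ω : ℕ → (Fin n → ℝ)) :
    prependState x ω ∈ reachAvoidEvent Xs Xr 0 ↔ x ∈ Xr := by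
  constructor
  · rintro ⟨k, hk, hr, -⟩
    interval_cases k
    exact hr
  · intro hx
    exact ⟨0, le_refl 0, hx, fun k' hk' => absurd hk' (Nat.not_lt_zero _)⟩

lemma prepend_mem_RA_succ {Xs Xr : Set (Fin n → ℝ)} (x : Fin n → ℝ) (H : ℕ)
    (ω : ℕ → (Fin n → ℝ)) :
    prependState x ω ∈ reachAvoidEvent Xs Xr (H + 1) ↔
      x ∈ Xr ∨ (x ∈ Xs ∧ ω ∈ reachAvoidEvent Xs Xr H) := by
  constructor
  · rintro ⟨k, hk, hr, hs⟩
    cases k with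
    | zero => exact Or.inl hr
    | succ k =>
      right
      have hx : x ∈ Xs := by
        have := hs 0 (Nat.succ_pos k)
        simpa [prependState] using this
      exact ⟨hx, k, Nat.lt_succ_iff.mp (Nat.lt_of_succ_le hk), hr, fun k' hk' => hs (k' + 1) (Nat.succ_lt_succ hk')⟩
  · rintro (hx | ⟨hx, k, hk, hr, hs⟩)
    · exact ⟨0, Nat.zero_le _, hx, fun k' hk' => absurd hk' (Nat.not_lt_zero _)⟩
    · refine ⟨k + 1, Nat.succ_le_succ hk, hr, fun k' hk' => ?_⟩
      cases k' with
      | zero => simpa [prependState] using hx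
      | succ k' => exact hs k' (Nat.lt_of_succ_lt_succ hk')

lemma bind_apply_aemeasurable {α β : Type*} [MeasurableSpace α] [MeasurableSpace β]
    {m : Measure α} {f : α → Measure β} {s : Set β} (hs : MeasurableSet s)
    (hf : AEMeasurable f m) : m.bind f s = ∫⁻ a, f a s ∂m := by
  rw [Measure.bind, Measure.join_apply hs,
    lintegral_map' (Measure.measurable_coe hs).aemeasurable hf]

end AuxRA

/-- For every `k ∈ ℕ` and every `x ∈ ℝⁿ`, the probability under the
trajectory measure of the reach-avoid event equals the value function:
`Pr^x(RA_k) = V_k(x)`. -/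
theorem trajectoryMeasure_reachAvoidEvent_eq_value
    {n : ℕ} (κ : Kernel (Fin n → ℝ) (Fin n → ℝ)) [IsMarkovKernel κ]
    (Xs Xr : Set (Fin n → ℝ))
    (hXs : MeasurableSet Xs) (hXr : MeasurableSet Xr) (hXrXs : Xr ⊆ Xs)
    (Pr : (Fin n → ℝ) → Measure (ℕ → (Fin n → ℝ)))
    (hPrProb : ∀ x, IsProbabilityMeasure (Pr x))
    (hPrRec : ∀ x, Pr x = (κ x).bind (fun y => (Pr y).map (prependState x))) :
    ∀ (k : ℕ) (x : Fin n → ℝ),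
      (Pr x (reachAvoidEvent Xs Xr k)).toReal = reachAvoidValue κ Xs Xr k x := by
  intro k
  induction k with
  | zero =>
    intro x
    have hmeas := measurable_prependState (n := n) x
    have hRA := measurableSet_reachAvoidEvent (n := n) hXs hXr 0
    have haem : AEMeasurable (fun y => (Pr y).map (prependState x)) (κ x) := by
      by_contra h
      have h0 : Pr x = 0 := by
        rw [hPrRec x, Measure.bind, Measure.map_of_not_aemeasurable h, Measure.join_zero]
      have := (hPrProb x).measure_univ
      simp [h0] at this
    rw [hPrRec x, bind_apply_aemeasurable hRA haem]
    have hpt : ∀ y, ((Pr y).map (prependState x)) (reachAvoidEvent Xs Xr 0)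
        = (if x ∈ Xr then 1 else 0 : ENNReal) := by
      intro y
      rw [Measure.map_apply hmeas hRA]
      have hpre : prependState x ⁻¹' reachAvoidEvent Xs Xr 0 =
          if x ∈ Xr then Set.univ else ∅ := by
        ext ω
        by_cases hx : x ∈ Xr <;>
          simp [hx, Set.mem_preimage, prepend_mem_RA_zero (Xs := Xs) x ω]
      rw [hpre]
      by_cases hx : x ∈ Xr <;> simp [hx, (hPrProb y).measure_univ]
    rw [lintegral_congr hpt]
    by_cases hx : x ∈ Xr <;>
      simp [hx, reachAvoidValue, (IsMarkovKernel.isProbabilityMeasure x).measure_univ]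
  | succ H IH =>
    intro x
    have hmeas := measurable_prependState (n := n) x
    have hRA := measurableSet_reachAvoidEvent (n := n) hXs hXr (H + 1)
    have hRAH := measurableSet_reachAvoidEvent (n := n) hXs hXr H
    have haem : AEMeasurable (fun y => (Pr y).map (prependState x)) (κ x) := by
      by_contra h
      have h0 : Pr x = 0 := by
        rw [hPrRec x, Measure.bind, Measure.map_of_not_aemeasurable h, Measure.join_zero]
      have := (hPrProb x).measure_univ
      simp [h0] at this
    rw [hPrRec x, bind_apply_aemeasurable hRA haem]
    have hpre : prependState x ⁻¹' reachAvoidEvent Xs Xr (H + 1) =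
        if x ∈ Xr then Set.univ else if x ∈ Xs then reachAvoidEvent Xs Xr H else ∅ := by
      ext ω
      by_cases hx : x ∈ Xr
      · simp [hx, Set.mem_preimage, prepend_mem_RA_succ (Xs := Xs) x H ω]
      · by_cases hx' : x ∈ Xs <;>
          simp [hx, hx', Set.mem_preimage, prepend_mem_RA_succ (Xs := Xs) x H ω]
    by_cases hx : x ∈ Xr
    · have hpt : ∀ y, ((Pr y).map (prependState x)) (reachAvoidEvent Xs Xr (H + 1))
          = (1 : ENNReal) := by
        intro y
        rw [Measure.map_apply hmeas hRA, hpre]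
        simp [hx, (hPrProb y).measure_univ]
      rw [lintegral_congr hpt]
      simp [hx, reachAvoidValue, (IsMarkovKernel.isProbabilityMeasure x).measure_univ]
    · by_cases hx' : x ∈ Xs
      · have hpt : ∀ y, ((Pr y).map (prependState x)) (reachAvoidEvent Xs Xr (H + 1))
            = Pr y (reachAvoidEvent Xs Xr H) := by
          intro y
          rw [Measure.map_apply hmeas hRA, hpre]
          simp [hx, hx']
        rw [lintegral_congr hpt]
        have haem2 : AEMeasurable (fun y => Pr y (reachAvoidEvent Xs Xr H)) (κ x) := by
          have := (Measure.measurable_coe hRA).comp_aemeasurable haem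
          exact this.congr (Filter.Eventually.of_forall fun y => hpt y)
        have hfin : ∀ᵐ y ∂(κ x), Pr y (reachAvoidEvent Xs Xr H) < ⊤ :=
          Filter.Eventually.of_forall fun y =>
            (measure_lt_top (Pr y) _)
        rw [← integral_toReal haem2 hfin]
        have : (fun y => (Pr y (reachAvoidEvent Xs Xr H)).toReal)
            = fun y => reachAvoidValue κ Xs Xr H y := funext fun y => IH y
        rw [this]
        simp [reachAvoidValue, hx, hx']
      · have hpt : ∀ y, ((Pr y).map (prependState x)) (reachAvoidEvent Xs Xr (H + 1))
            = (0 : ENNReal) := by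
          intro y
          rw [Measure.map_apply hmeas hRA, hpre]
          simp [hx, hx']
        rw [lintegral_congr hpt]
        simp [reachAvoidValue, hx, hx']
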